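/- Let q be a prime power and n ≥ 1, d ≥ 2 integers. The number of nonzero polynomials F ∈ S_{n,d}(F_q) that are reducible in F_q[x_0, …, x_n] (i.e., a product of two nonconstant polynomials), plus one, is at most Σ_{i=1}^{⌊d/2⌋} q^{binom(n+i, n) + binom(n+d−i, n)}. Equivalently, the proportion of reducible polynomials among all of S_{n,d}(F_q) is at most Σ_{i=1}^{⌊d/2⌋} q^{−N_i}, where N_i = binom(n+d, n) − binom(n+i, n) − binom(n+d−i, n). -/

import Mathlib

open MvPolynomial Polynomial

noncomputable def psi (σ F : Type*) [CommSemiring F] :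
    MvPolynomial σ F →ₐ[F] Polynomial (MvPolynomial σ F) :=
  MvPolynomial.aeval (fun i => Polynomial.C (MvPolynomial.X i) * Polynomial.X)

lemma psi_monomial {σ F : Type*} [CommSemiring F] (m : σ →₀ ℕ) (c : F) :
    psi σ F (MvPolynomial.monomial m c) =
      Polynomial.C (MvPolynomial.monomial m c) * Polynomial.X ^ m.degree := by
  rw [psi, MvPolynomial.aeval_monomial]
  have h1 : (m.prod fun i e => (Polynomial.C (MvPolynomial.X i) * Polynomial.X) ^ e) =
      Polynomial.C (m.prod fun i e => (MvPolynomial.X i : MvPolynomial σ F) ^ e) *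
        Polynomial.X ^ m.degree := by
    rw [Finsupp.prod, Finsupp.degree, Finsupp.prod]
    simp_rw [mul_pow, ← Polynomial.C_pow]
    rw [Finset.prod_mul_distrib, Finset.prod_pow_eq_pow_sum, ← map_prod]
    rfl
  rw [h1, MvPolynomial.monomial_eq]
  simp only [map_mul]
  rw [show (algebraMap F (MvPolynomial σ F)[X]) c = Polynomial.C (MvPolynomial.C c) from rfl]
  ring

lemma psi_coeff {σ F : Type*} [CommSemiring F] (φ : MvPolynomial σ F) (k : ℕ) :
    (psi σ F φ).coeff k = MvPolynomial.homogeneousComponent k φ := by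
  induction φ using MvPolynomial.induction_on' with
  | monomial m c =>
      rw [psi_monomial, homogeneousComponent_of_mem (isHomogeneous_monomial c rfl)]
      rw [Polynomial.coeff_C_mul, Polynomial.coeff_X_pow]
      by_cases h : k = m.degree <;> simp [h, eq_comm]
  | add p q hp hq =>
      rw [map_add, Polynomial.coeff_add, hp, hq, map_add]

lemma hc_totalDegree_ne_zero {σ F : Type*} [CommSemiring F] {φ : MvPolynomial σ F}
    (h : φ ≠ 0) : MvPolynomial.homogeneousComponent φ.totalDegree φ ≠ 0 := by
  obtain ⟨m, hm, hdeg⟩ := Finset.exists_mem_eq_sup φ.support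
    (MvPolynomial.support_nonempty.2 h) (fun m => m.degree)
  have hts : φ.totalDegree = φ.support.sup fun m => m.degree := rfl
  have hmd : m.degree = φ.totalDegree := by rw [hts, hdeg]
  intro hzero
  have := MvPolynomial.coeff_homogeneousComponent (φ := φ) φ.totalDegree m
  rw [hzero, hmd] at this
  simp at this
  exact (MvPolynomial.mem_support_iff.1 hm) this.symm

lemma natDegree_psi {σ F : Type*} [CommSemiring F] {φ : MvPolynomial σ F} (h : φ ≠ 0) :
    (psi σ F φ).natDegree = φ.totalDegree := by
  apply le_antisymm
  · apply Polynomial.natDegree_le_iff_coeff_eq_zero.2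
    intro k hk
    rw [psi_coeff]
    exact MvPolynomial.homogeneousComponent_eq_zero _ _ hk
  · apply Polynomial.le_natDegree_of_ne_zero
    rw [psi_coeff]
    exact hc_totalDegree_ne_zero h

lemma psi_ne_zero {σ F : Type*} [CommSemiring F] {φ : MvPolynomial σ F} (h : φ ≠ 0) :
    psi σ F φ ≠ 0 := by
  intro hz
  apply hc_totalDegree_ne_zero h
  rw [← psi_coeff, hz, Polynomial.coeff_zero]

lemma isHomogeneous_of_psi {σ F : Type*} [CommSemiring F] {φ : MvPolynomial σ F} {k : ℕ}
    (h : ∀ j, j ≠ k → (psi σ F φ).coeff j = 0) : φ.IsHomogeneous k := by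
  have hφ : φ = MvPolynomial.homogeneousComponent k φ := by
    conv_lhs => rw [← MvPolynomial.sum_homogeneousComponent φ]
    by_cases hk : k ∈ Finset.range (φ.totalDegree + 1)
    · rw [Finset.sum_eq_single_of_mem k hk]
      intro j _ hj
      have := h j hj
      rwa [psi_coeff] at this
    · have h2 : MvPolynomial.homogeneousComponent k φ = 0 :=
        MvPolynomial.homogeneousComponent_eq_zero _ _ (by simp at hk; omega)
      rw [h2, Finset.sum_eq_zero]
      intro j hj
      rcases eq_or_ne j k with rfl | hjk
      · exact absurd hj hk
      · have := h j hjk; rwa [psi_coeff] at this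
  rw [hφ]
  exact MvPolynomial.homogeneousComponent_isHomogeneous k φ

lemma factors_homogeneous {σ F : Type*} [Field F] {f a b : MvPolynomial σ F} {d : ℕ}
    (hf : f.IsHomogeneous d) (h0 : f ≠ 0) (hab : f = a * b) :
    a.IsHomogeneous a.totalDegree ∧ b.IsHomogeneous b.totalDegree ∧
      a.totalDegree + b.totalDegree = d := by
  have ha : a ≠ 0 := fun h => h0 (by simp [hab, h])
  have hb : b ≠ 0 := fun h => h0 (by simp [hab, h])
  have hpsif : psi σ F f = psi σ F a * psi σ F b := by rw [hab, map_mul]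
  have hdf : f.totalDegree = d := hf.totalDegree h0
  have hnd : (psi σ F f).natDegree = d := by rw [natDegree_psi h0, hdf]
  have hndmul : (psi σ F a).natDegree + (psi σ F b).natDegree = d := by
    rw [← hnd, hpsif, Polynomial.natDegree_mul (psi_ne_zero ha) (psi_ne_zero hb)]
  have htf : (psi σ F f).natTrailingDegree = d := by
    apply le_antisymm
    · rw [← hnd]; exact Polynomial.natTrailingDegree_le_natDegree _
    · apply Polynomial.le_natTrailingDegree (psi_ne_zero h0)
      intro j hj
      rw [psi_coeff, MvPolynomial.homogeneousComponent_of_mem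
        ((MvPolynomial.mem_homogeneousSubmodule _ _).2 hf), if_neg (by omega : j ≠ d)]
  have htmul : (psi σ F a).natTrailingDegree + (psi σ F b).natTrailingDegree = d := by
    rw [← htf, hpsif, Polynomial.natTrailingDegree_mul (psi_ne_zero ha) (psi_ne_zero hb)]
  have hta : (psi σ F a).natTrailingDegree = (psi σ F a).natDegree := by
    have h1 := Polynomial.natTrailingDegree_le_natDegree (psi σ F a)
    have h2 := Polynomial.natTrailingDegree_le_natDegree (psi σ F b)
    omega
  have htb : (psi σ F b).natTrailingDegree = (psi σ F b).natDegree := by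
    have h1 := Polynomial.natTrailingDegree_le_natDegree (psi σ F a)
    have h2 := Polynomial.natTrailingDegree_le_natDegree (psi σ F b)
    omega
  have hahom : a.IsHomogeneous a.totalDegree := by
    apply isHomogeneous_of_psi
    intro j hj
    rw [← natDegree_psi ha] at hj
    rcases lt_or_gt_of_ne hj with h | h
    · exact Polynomial.coeff_eq_zero_of_lt_natTrailingDegree (by rw [hta]; exact h)
    · exact Polynomial.coeff_eq_zero_of_natDegree_lt h
  have hbhom : b.IsHomogeneous b.totalDegree := by
    apply isHomogeneous_of_psi
    intro j hj
    rw [← natDegree_psi hb] at hj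
    rcases lt_or_gt_of_ne hj with h | h
    · exact Polynomial.coeff_eq_zero_of_lt_natTrailingDegree (by rw [htb]; exact h)
    · exact Polynomial.coeff_eq_zero_of_natDegree_lt h
  refine ⟨hahom, hbhom, ?_⟩
  rw [← natDegree_psi ha, ← natDegree_psi hb]
  exact hndmul

lemma degree_toFinsupp {α : Type*} [DecidableEq α] (s : Multiset α) :
    (Multiset.toFinsupp s).degree = Multiset.card s := by
  rw [← Multiset.toFinsupp_sum_eq]
  rfl

noncomputable def symEquiv (m i : ℕ) :
    Sym (Fin m) i ≃ {μ : Fin m →₀ ℕ // μ.degree = i} :=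
  Equiv.subtypeEquiv Multiset.toFinsupp.toEquiv
    (fun s => by rw [show Multiset.toFinsupp.toEquiv s = Multiset.toFinsupp s from rfl,
      degree_toFinsupp])

noncomputable instance (m i : ℕ) : Fintype {μ : Fin m →₀ ℕ // μ.degree = i} :=
  Fintype.ofEquiv _ (symEquiv m i)

lemma card_monomials (m i : ℕ) :
    Nat.card {μ : Fin m →₀ ℕ // μ.degree = i} = (m + i - 1).choose i := by
  rw [Nat.card_eq_fintype_card, ← Fintype.card_congr (symEquiv m i),
    Sym.card_sym_eq_choose, Fintype.card_fin]

lemma finite_hom {F : Type*} [Field F] [Fintype F] (m i : ℕ) :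
    Finite {p : MvPolynomial (Fin m) F // p.IsHomogeneous i} := by
  classical
  apply Finite.of_injective
      (fun (p : {p : MvPolynomial (Fin m) F // p.IsHomogeneous i}) =>
        (fun μ : {μ : Fin m →₀ ℕ // μ.degree = i} => MvPolynomial.coeff μ.1 p.1))
  intro p p' h
  ext1
  apply MvPolynomial.ext
  intro μ
  by_cases hd : μ.degree = i
  · exact congrFun h ⟨μ, hd⟩
  · rw [p.2.coeff_eq_zero hd, p'.2.coeff_eq_zero hd]

lemma card_hom_le {F : Type*} [Field F] [Fintype F] (m i : ℕ) :
    Nat.card {p : MvPolynomial (Fin m) F // p.IsHomogeneous i} ≤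
      (Fintype.card F) ^ ((m + i - 1).choose i) := by
  classical
  have hinj : Function.Injective
      (fun (p : {p : MvPolynomial (Fin m) F // p.IsHomogeneous i}) =>
        (fun μ : {μ : Fin m →₀ ℕ // μ.degree = i} => MvPolynomial.coeff μ.1 p.1)) := by
    intro p p' h
    ext1
    apply MvPolynomial.ext
    intro μ
    by_cases hd : μ.degree = i
    · exact congrFun h ⟨μ, hd⟩
    · rw [p.2.coeff_eq_zero hd, p'.2.coeff_eq_zero hd]
  calc Nat.card {p : MvPolynomial (Fin m) F // p.IsHomogeneous i}
      ≤ Nat.card ({μ : Fin m →₀ ℕ // μ.degree = i} → F) :=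
        Nat.card_le_card_of_injective _ hinj
    _ = (Fintype.card F) ^ ((m + i - 1).choose i) := by
        rw [Nat.card_fun, Nat.card_eq_fintype_card, card_monomials]

lemma nat_card_sigma {ι : Type*} [Fintype ι] (f : ι → Type*) [∀ i, Finite (f i)] :
    Nat.card ((i : ι) × f i) = ∑ i, Nat.card (f i) := by
  letI : ∀ i, Fintype (f i) := fun i => Fintype.ofFinite _
  simp only [Nat.card_eq_fintype_card]
  exact Fintype.card_sigma

lemma exists_fact {σ F : Type*} [Field F] {f : MvPolynomial σ F} {d : ℕ}
    (hf : f.IsHomogeneous d) (h0 : f ≠ 0)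
    {a b : MvPolynomial σ F} (ha : 0 < a.totalDegree) (hb : 0 < b.totalDegree)
    (hab : f = a * b) :
    ∃ i, i ∈ Finset.Icc 1 (d / 2) ∧ ∃ g h : MvPolynomial σ F,
      g.IsHomogeneous i ∧ h.IsHomogeneous (d - i) ∧ f = g * h := by
  obtain ⟨hA, hB, hsum⟩ := factors_homogeneous hf h0 hab
  rcases le_total a.totalDegree b.totalDegree with hle | hle
  · refine ⟨a.totalDegree, Finset.mem_Icc.2 ⟨ha, by omega⟩, a, b, hA, ?_, hab⟩
    have : d - a.totalDegree = b.totalDegree := by omega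
    rw [this]; exact hB
  · refine ⟨b.totalDegree, Finset.mem_Icc.2 ⟨hb, by omega⟩, b, a, hB, ?_, by rw [hab, mul_comm]⟩
    have : d - b.totalDegree = a.totalDegree := by omega
    rw [this]; exact hA

/-- **Bound on the number of reducible degree-`d` forms.** Let `q` be a prime power,
`F = F_q`, `n ≥ 1`, `d ≥ 2`. The number of nonzero homogeneous polynomials of degree `d`
in `n+1` variables over `F` that are reducible (a product of two nonconstant polynomials),
plus one, is at most `Σ_{i=1}^{⌊d/2⌋} q^{binom(n+i,n) + binom(n+d−i,n)}`. -/
theorem stmt11 (q : ℕ) (hq : IsPrimePow q) (F : Type*) [Field F] [Fintype F]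
    (hF : Fintype.card F = q) (n d : ℕ) (hn : 1 ≤ n) (hd : 2 ≤ d) :
    Nat.card {f : MvPolynomial (Fin (n + 1)) F //
        f ∈ MvPolynomial.homogeneousSubmodule (Fin (n + 1)) F d ∧ f ≠ 0 ∧
        ∃ a b : MvPolynomial (Fin (n + 1)) F,
          0 < a.totalDegree ∧ 0 < b.totalDegree ∧ f = a * b} + 1 ≤
      ∑ i ∈ Finset.Icc 1 (d / 2), q ^ ((n + i).choose n + (n + d - i).choose n) := by
  classical
  set R := MvPolynomial (Fin (n + 1)) F
  set T := {f : R // f ∈ MvPolynomial.homogeneousSubmodule (Fin (n + 1)) F d ∧ f ≠ 0 ∧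
        ∃ a b : R, 0 < a.totalDegree ∧ 0 < b.totalDegree ∧ f = a * b}
  set S : ℕ → Type _ := fun i => {p : R // p.IsHomogeneous i} with hS
  letI : ∀ i, Fintype (S i) := fun i => @Fintype.ofFinite _ (finite_hom (n + 1) i)
  set U := (i : {x // x ∈ Finset.Icc 1 (d / 2)}) × (S i.1 × S (d - i.1)) with hU
  haveI : Fintype U := Sigma.instFintype
  have hmem1 : (1 : ℕ) ∈ Finset.Icc 1 (d / 2) := Finset.mem_Icc.2 ⟨le_refl 1, by omega⟩
  -- choice of factorization
  have key : ∀ f : T, ∃ u : U, (u.2.1.1 * u.2.2.1 : R) = f.1 := by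
    rintro ⟨f, hfmem, hf0, a, b, ha, hb, hab⟩
    obtain ⟨i, hi, g, h, hg, hh, hgh⟩ :=
      exists_fact ((MvPolynomial.mem_homogeneousSubmodule _ _).1 hfmem) hf0 ha hb hab
    exact ⟨⟨⟨i, hi⟩, ⟨g, hg⟩, ⟨h, hh⟩⟩, hgh.symm⟩
  choose Φ hΦ using key
  have hΦinj : Function.Injective Φ := by
    intro f1 f2 h
    have := (hΦ f1).symm.trans (h ▸ hΦ f2)
    exact Subtype.ext this
  haveI : Finite U := by
    rw [hU]; infer_instance
  haveI : Finite T := Finite.of_injective Φ hΦinj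
  -- extended injection from Option T
  set u0 : U := ⟨⟨1, hmem1⟩, ⟨0, MvPolynomial.isHomogeneous_zero _ _ _⟩,
    ⟨0, MvPolynomial.isHomogeneous_zero _ _ _⟩⟩ with hu0
  have hΨinj : Function.Injective (fun o : Option T => o.elim u0 Φ) := by
    intro o1 o2 h
    match o1, o2 with
    | none, none => rfl
    | none, some f =>
        exfalso
        apply f.2.2.1
        have h' : u0 = Φ f := h
        have := hΦ f
        rw [← h'] at this
        rw [hu0] at this
        simpa using this.symm
    | some f, none =>
        exfalso
        apply f.2.2.1
        have h' : Φ f = u0 := h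
        have := hΦ f
        rw [h'] at this
        rw [hu0] at this
        simpa using this.symm
    | some f1, some f2 => exact congrArg some (hΦinj h)
  have hcard1 : Nat.card T + 1 ≤ Nat.card U := by
    rw [← Finite.card_option]
    exact Nat.card_le_card_of_injective _ hΨinj
  refine le_trans hcard1 ?_
  -- compute card U
  have hcardU : Nat.card U = ∑ i ∈ Finset.Icc 1 (d / 2),
      Nat.card (S i) * Nat.card (S (d - i)) := by
    have h1 : Nat.card U = ∑ i : (Finset.Icc 1 (d / 2) : Finset ℕ),
        Nat.card (S i.1 × S (d - i.1)) :=
      nat_card_sigma (fun i : (Finset.Icc 1 (d / 2) : Finset ℕ) => S i.1 × S (d - i.1))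
    rw [h1, ← Finset.sum_coe_sort (Finset.Icc 1 (d / 2))
      (fun i => Nat.card (S i) * Nat.card (S (d - i)))]
    exact Finset.sum_congr rfl fun i _ => Nat.card_prod _ _
  rw [hcardU]
  apply Finset.sum_le_sum
  intro i hi
  have hi' := Finset.mem_Icc.1 hi
  have hbound : ∀ j : ℕ, Nat.card (S j) ≤ q ^ ((n + j).choose j) := by
    intro j
    have := card_hom_le (F := F) (n + 1) j
    have harith : n + 1 + j - 1 = n + j := by omega
    rw [harith, hF] at this
    exact this
  have hsym : ∀ j : ℕ, (n + j).choose j = (n + j).choose n := by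
    intro j
    have := Nat.choose_symm (n := n + j) (k := j) (by omega)
    rw [show n + j - j = n by omega] at this
    exact this.symm
  calc Nat.card (S i) * Nat.card (S (d - i))
      ≤ q ^ ((n + i).choose i) * q ^ ((n + (d - i)).choose (d - i)) :=
        Nat.mul_le_mul (hbound i) (hbound (d - i))
    _ = q ^ ((n + i).choose n + (n + d - i).choose n) := by
        rw [← pow_add, hsym i, hsym (d - i), show n + (d - i) = n + d - i by omega]
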